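/- Bound on the component-recursion complexity function (Lemma 5.11): Fix an integer r ≥ 2. Let α be an r-uniform hypergraph with w(α) connected components, and for any hypergraph β let 𝒞_β denote the set of subgraphs of β that are unions of connected components of β. Let 𝓗 be the function on hypergraphs defined recursively by 𝓗(α) = 2 + 2·Σ_{β ∈ 𝒞_α, β ≠ α} 𝓗(β) (in particular 𝓗(α) = 2 when α is connected or empty). Then 𝓗(α) ≤ 2·w(α)!·3^{w(α)}. -/
import Mathlib


open scoped Classical

/-- β is a union of connected components of α: β ⊆ α and no edge of β shares a
vertex with an edge of α ∖ β. -/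
def IsCompUnion {n r : ℕ} (α β : Finset {s : Finset (Fin n) // s.card = r}) : Prop :=
  β ⊆ α ∧ ∀ e ∈ β, ∀ e' ∈ α, e' ∉ β → Disjoint e.1 e'.1

/-- The number of connected components of the hypergraph α (components of the
relation on its edges generated by "sharing a vertex"). -/
noncomputable def numComponents {n r : ℕ}
    (α : Finset {s : Finset (Fin n) // s.card = r}) : ℕ :=
  Nat.card (Quot fun e e' : {x : {s : Finset (Fin n) // s.card = r} // x ∈ α} =>
    ¬ Disjoint e.1.1 e'.1.1)

section Aux

variable {n r : ℕ}

private abbrev Edge (n r : ℕ) := {s : Finset (Fin n) // s.card = r}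

private def CRel (α : Finset (Edge n r)) (e e' : {x : Edge n r // x ∈ α}) : Prop :=
  ¬ Disjoint e.1.1 e'.1.1

private lemma numComponents_def (α : Finset (Edge n r)) :
    numComponents α = Nat.card (Quot (CRel α)) := rfl

private lemma mem_iff_of_eqvGen {α β : Finset (Edge n r)} (hβ : IsCompUnion α β)
    {x y : {x : Edge n r // x ∈ α}} (h : Relation.EqvGen (CRel α) x y) :
    x.1 ∈ β ↔ y.1 ∈ β := by
  induction h with
  | rel a b hab =>
      constructor
      · intro ha; by_contra hb; exact hab (hβ.2 a.1 ha b.1 b.2 hb)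
      · intro hb; by_contra ha; exact hab ((hβ.2 b.1 hb a.1 a.2 ha).symm)
  | refl a => exact Iff.rfl
  | symm a b _ ih => exact ih.symm
  | trans a b c _ _ ih1 ih2 => exact ih1.trans ih2

private def inSet (α β : Finset (Edge n r)) (q : Quot (CRel α)) : Prop :=
  ∃ e : {x : Edge n r // x ∈ α}, Quot.mk (CRel α) e = q ∧ e.1 ∈ β

private lemma inSet_mk {α β : Finset (Edge n r)} (hβ : IsCompUnion α β)
    (e : {x : Edge n r // x ∈ α}) :
    inSet α β (Quot.mk (CRel α) e) ↔ e.1 ∈ β := by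
  constructor
  · rintro ⟨e', he', hmem⟩
    exact (mem_iff_of_eqvGen hβ (Quot.eqvGen_exact he')).1 hmem
  · intro h; exact ⟨e, rfl, h⟩

private lemma quot_eq_of_eqvGen {α β : Finset (Edge n r)} (hβ : IsCompUnion α β)
    {x y : {x : Edge n r // x ∈ α}} (h : Relation.EqvGen (CRel α) x y) :
    ∀ (hx : x.1 ∈ β) (hy : y.1 ∈ β),
      Quot.mk (CRel β) ⟨x.1, hx⟩ = Quot.mk (CRel β) ⟨y.1, hy⟩ := by
  induction h with
  | rel a b hab => intro hx hy; exact Quot.sound hab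
  | refl a => intro hx hy; rfl
  | symm a b _ ih => intro hx hy; exact (ih hy hx).symm
  | trans a b c hab _ ih1 ih2 =>
      intro hx hy
      have hb : b.1 ∈ β := (mem_iff_of_eqvGen hβ hab).1 hx
      exact (ih1 hx hb).trans (ih2 hb hy)

noncomputable instance (α : Finset (Edge n r)) : Fintype (Quot (CRel α)) :=
  Fintype.ofFinite _

private noncomputable def compSet (α β : Finset (Edge n r)) : Finset (Quot (CRel α)) :=
  Finset.univ.filter (inSet α β)

private def toQuot {α β : Finset (Edge n r)} (hβ : IsCompUnion α β) :
    Quot (CRel β) → {q : Quot (CRel α) // inSet α β q} :=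
  Quot.lift (fun e => ⟨Quot.mk (CRel α) ⟨e.1, hβ.1 e.2⟩, ⟨⟨e.1, hβ.1 e.2⟩, rfl, e.2⟩⟩)
    (fun a b hab => Subtype.ext (Quot.sound hab))

private lemma toQuot_bijective {α β : Finset (Edge n r)} (hβ : IsCompUnion α β) :
    Function.Bijective (toQuot hβ) := by
  constructor
  · intro x y
    induction x using Quot.ind with | _ a =>
    induction y using Quot.ind with | _ b =>
    intro hxy
    have h1 : Quot.mk (CRel α) ⟨a.1, hβ.1 a.2⟩ = Quot.mk (CRel α) ⟨b.1, hβ.1 b.2⟩ :=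
      congrArg Subtype.val hxy
    have h2 := quot_eq_of_eqvGen hβ (Quot.eqvGen_exact h1) a.2 b.2
    simpa using h2
  · rintro ⟨q, hq⟩
    induction q using Quot.ind with | _ x =>
    have hx : x.1 ∈ β := (inSet_mk hβ x).1 hq
    refine ⟨Quot.mk (CRel β) ⟨x.1, hx⟩, ?_⟩
    exact Subtype.ext (congrArg (Quot.mk (CRel α)) (Subtype.ext rfl))

private lemma numComponents_eq_card {α β : Finset (Edge n r)} (hβ : IsCompUnion α β) :
    numComponents β = (compSet α β).card := by
  rw [numComponents_def, Nat.card_eq_of_bijective (toQuot hβ) (toQuot_bijective hβ),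
    Nat.card_eq_fintype_card, Fintype.card_subtype]
  rfl

private lemma compSet_inj {α β β' : Finset (Edge n r)} (hβ : IsCompUnion α β)
    (hβ' : IsCompUnion α β') (h : compSet α β = compSet α β') : β = β' := by
  have key : ∀ (γ γ' : Finset (Edge n r)), IsCompUnion α γ → IsCompUnion α γ' →
      compSet α γ = compSet α γ' → γ ⊆ γ' := by
    intro γ γ' hγ hγ' hset e he
    have hmem : e ∈ α := hγ.1 he
    have h1 : Quot.mk (CRel α) ⟨e, hmem⟩ ∈ compSet α γ :=
      Finset.mem_filter.2 ⟨Finset.mem_univ _, (inSet_mk hγ _).2 he⟩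
    rw [hset] at h1
    exact (inSet_mk hγ' _).1 (Finset.mem_filter.1 h1).2
  exact le_antisymm (key _ _ hβ hβ' h) (key _ _ hβ' hβ h.symm)

private lemma compSet_ne_univ {α β : Finset (Edge n r)} (hβ : IsCompUnion α β)
    (hne : β ≠ α) : compSet α β ≠ Finset.univ := by
  intro h
  apply hne
  apply le_antisymm hβ.1
  intro e he
  have h1 : Quot.mk (CRel α) ⟨e, he⟩ ∈ compSet α β := h ▸ Finset.mem_univ _
  exact (inSet_mk hβ _).1 (Finset.mem_filter.1 h1).2

/-- `A w = ∑_{k<w} w^{(k)} 3^k`, the key sum. -/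
private def Asum (w : ℕ) : ℕ := ∑ k ∈ Finset.range w, w.descFactorial k * 3 ^ k

private lemma Asum_succ (w : ℕ) : Asum (w + 1) = 3 * (w + 1) * Asum w + 1 := by
  rw [Asum, Finset.sum_range_succ']
  simp only [Nat.succ_descFactorial_succ, Nat.descFactorial_zero, pow_succ, pow_zero]
  rw [Asum, Finset.mul_sum]
  congr 1
  refine Finset.sum_congr rfl fun k _ => by ring

private lemma Asum_bound' : ∀ w, 3 ≤ w → 5 * Asum w + 2 ≤ 2 * (w.factorial * 3 ^ w) := by
  intro w hw
  induction w with
  | zero => omega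
  | succ w ih =>
      rcases Nat.lt_or_ge w 3 with hw3 | hw3
      · interval_cases w
        · omega
        · omega
        · -- w+1 = 3
          norm_num [Asum_succ, Asum, Finset.sum_range_succ, Nat.factorial]
      · have IH := ih hw3
        rw [Asum_succ]
        have hfac : (w + 1).factorial * 3 ^ (w + 1) = 3 * (w + 1) * (w.factorial * 3 ^ w) := by
          rw [Nat.factorial_succ, pow_succ]; ring
        rw [hfac]
        nlinarith [IH, hw3]

private lemma Asum_bound : ∀ w, 1 + 2 * Asum w ≤ w.factorial * 3 ^ w := by
  intro w
  rcases Nat.lt_or_ge w 3 with hw | hw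
  · interval_cases w
    · simp [Asum]
    · norm_num [Asum, Finset.sum_range_succ]
    · norm_num [Asum, Asum_succ, Finset.sum_range_succ, Nat.factorial]
  · have h := Asum_bound' w hw
    have hpos : 1 ≤ w.factorial * 3 ^ w :=
      Nat.one_le_iff_ne_zero.2 (by positivity)
    omega

end Aux

set_option maxHeartbeats 1000000 in
/-- Lemma 5.11: any function 𝓗 on r-uniform hypergraphs satisfying the recursion
𝓗(α) = 2 + 2·Σ_{β ∈ 𝒞_α, β ≠ α} 𝓗(β), where 𝒞_α is the set of unions of connected
components of α (including ∅ and α itself), satisfies 𝓗(α) ≤ 2·w(α)!·3^{w(α)}, with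
w(α) the number of connected components of α. -/
theorem complexity_function_bound (n r : ℕ) (hr : 2 ≤ r)
    (H : Finset {s : Finset (Fin n) // s.card = r} → ℝ)
    (hH : ∀ α, H α =
      2 + 2 * ∑ β ∈ (α.powerset.filter fun β => IsCompUnion α β).erase α, H β) :
    ∀ α, H α ≤ 2 * (Nat.factorial (numComponents α)) * 3 ^ (numComponents α) := by
  have key : ∀ w : ℕ, ∀ α, numComponents α = w →
      H α ≤ 2 * (Nat.factorial w) * 3 ^ w := by
    intro w
    induction w using Nat.strong_induction_on with
    | _ w ih =>
      intro α hα
      set T := (α.powerset.filter fun β => IsCompUnion α β).erase α with hT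
      have hTfacts : ∀ β ∈ T, IsCompUnion α β ∧ β ≠ α := by
        intro β hβ
        rw [hT, Finset.mem_erase, Finset.mem_filter] at hβ
        exact ⟨hβ.2.2, hβ.1⟩
      have huniv : (Finset.univ : Finset (Quot (CRel α))).card = w := by
        rw [Finset.card_univ, ← Nat.card_eq_fintype_card, ← numComponents_def, hα]
      -- each β ∈ T has strictly fewer components
      have hcard : ∀ β ∈ T, (compSet α β).card < w := by
        intro β hβ
        obtain ⟨hcu, hne⟩ := hTfacts β hβ
        rw [← huniv]
        exact Finset.card_lt_card
          ⟨Finset.filter_subset _ _ |>.trans (le_refl _) |>.trans (Finset.subset_univ _),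
            fun h => compSet_ne_univ hcu hne (le_antisymm (Finset.subset_univ _) h)⟩
      set f : ℕ → ℝ := fun k => 2 * (Nat.factorial k) * 3 ^ k with hf
      have hHb : ∀ β ∈ T, H β ≤ f ((compSet α β).card) := by
        intro β hβ
        exact ih _ (hcard β hβ) β (numComponents_eq_card (hTfacts β hβ).1)
      have step1 : ∑ β ∈ T, H β ≤ ∑ β ∈ T, f ((compSet α β).card) :=
        Finset.sum_le_sum hHb
      have hinj : ∀ x ∈ T, ∀ y ∈ T, compSet α x = compSet α y → x = y :=
        fun x hx y hy h => compSet_inj (hTfacts x hx).1 (hTfacts y hy).1 h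
      have step2 : ∑ β ∈ T, f ((compSet α β).card)
          = ∑ S ∈ T.image (compSet α), f S.card :=
        (Finset.sum_image (f := fun S => f S.card) hinj).symm
      have himg : T.image (compSet α) ⊆
          (Finset.univ : Finset (Quot (CRel α))).powerset.erase Finset.univ := by
        intro S hS
        rw [Finset.mem_image] at hS
        obtain ⟨β, hβ, rfl⟩ := hS
        rw [Finset.mem_erase, Finset.mem_powerset]
        exact ⟨compSet_ne_univ (hTfacts β hβ).1 (hTfacts β hβ).2, Finset.subset_univ _⟩
      have step3 : ∑ S ∈ T.image (compSet α), f S.card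
          ≤ ∑ S ∈ (Finset.univ : Finset (Quot (CRel α))).powerset.erase Finset.univ,
              f S.card := by
        refine Finset.sum_le_sum_of_subset_of_nonneg himg fun S _ _ => ?_
        rw [hf]; positivity
      have step4 : ∑ S ∈ (Finset.univ : Finset (Quot (CRel α))).powerset.erase Finset.univ,
          f S.card = ∑ k ∈ Finset.range w, (w.choose k : ℝ) * f k := by
        have h1 : ∑ S ∈ (Finset.univ : Finset (Quot (CRel α))).powerset.erase Finset.univ,
              f S.card + f (Finset.univ : Finset (Quot (CRel α))).card
            = ∑ S ∈ (Finset.univ : Finset (Quot (CRel α))).powerset, f S.card :=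
          Finset.sum_erase_add _ _ (Finset.mem_powerset_self _)
        rw [huniv] at h1
        have h2 : ∑ S ∈ (Finset.univ : Finset (Quot (CRel α))).powerset, f S.card
            = ∑ k ∈ Finset.range (w + 1), (w.choose k : ℝ) * f k := by
          rw [Finset.sum_powerset_apply_card, huniv]
          exact Finset.sum_congr rfl fun k _ => by rw [nsmul_eq_mul]
        rw [Finset.sum_range_succ, Nat.choose_self, Nat.cast_one, one_mul] at h2
        linarith [h1, h2]
      have step5 : ∑ k ∈ Finset.range w, (w.choose k : ℝ) * f k = 2 * (Asum w : ℝ) := by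
        rw [Asum, Nat.cast_sum, Finset.mul_sum]
        refine Finset.sum_congr rfl fun k _ => ?_
        rw [hf]
        push_cast [Nat.descFactorial_eq_factorial_mul_choose]
        ring
      have hfinal : (1 : ℝ) + 2 * (Asum w : ℝ) ≤ (Nat.factorial w) * 3 ^ w := by
        have := Asum_bound w
        exact_mod_cast this
      calc H α = 2 + 2 * ∑ β ∈ T, H β := hH α
        _ ≤ 2 + 2 * (2 * (Asum w : ℝ)) := by
            have : ∑ β ∈ T, H β ≤ 2 * (Asum w : ℝ) := by
              calc ∑ β ∈ T, H β ≤ _ := step1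
                _ = _ := step2
                _ ≤ _ := step3
                _ = _ := step4
                _ = _ := step5
            linarith
        _ = 2 * ((1 : ℝ) + 2 * (Asum w : ℝ)) := by ring
        _ ≤ 2 * ((Nat.factorial w) * 3 ^ w) := by linarith
        _ = 2 * (Nat.factorial w) * 3 ^ w := by ring
  intro α
  exact key _ α rfl
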